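/- Let S be a multiplicatively closed subset of A containing 1, and let M be an A-module. Then the inclusions of Mat_d(M)_ad and of Mat_d(M)_real (the submodule of realisable matrices) into Mat_d(M) induce S⁻¹A-module isomorphisms S⁻¹(Mat_d(M)_ad) ≅ Mat_d(S⁻¹M)_ad and S⁻¹(Mat_d(M)_real) ≅ Mat_d(S⁻¹M)_real. In particular, if M is a matrix-realisable A-module then S⁻¹M is a matrix-realisable S⁻¹A-module. -/

import Mathlib

section Realisable

variable {A : Type*} [CommRing A]

/-- `(m₁,…,mₙ)` is an admissible vector for the structure constants `c`,
where `c i s t` denotes `cᵗ_{is}`: `∑ᵢ cᵗ_{is} mᵢ = 0` for all `s, t`. -/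
def AdmissibleVec {n d : ℕ} (c : Fin n → Fin d → Fin d → A)
    {M : Type*} [AddCommGroup M] [Module A M] (m : Fin n → M) : Prop :=
  ∀ s t : Fin d, ∑ i, c i s t • m i = 0

/-- The submodule of admissible vectors. -/
def admissibleVecSub {n d : ℕ} (c : Fin n → Fin d → Fin d → A)
    (M : Type*) [AddCommGroup M] [Module A M] : Submodule A (Fin n → M) where
  carrier := {m | AdmissibleVec c m}
  add_mem' {x y} hx hy := fun s t => by
    simp only [Pi.add_apply, smul_add, Finset.sum_add_distrib, hx s t, hy s t, add_zero]
  zero_mem' := fun s t => by simp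
  smul_mem' a x hx := fun s t => by
    simp only [Pi.smul_apply, smul_comm _ a, ← Finset.smul_sum, hx s t, smul_zero]

/-- A vector is realisable if it lies in the image of the natural map
`Aⁿ_ad ⊗_A M → Mⁿ`, i.e. in the span of the vectors `(a₁ • x, …, aₙ • x)` with
`(a₁,…,aₙ)` an admissible vector of scalars. -/
def RealisableVec {n d : ℕ} (c : Fin n → Fin d → Fin d → A)
    {M : Type*} [AddCommGroup M] [Module A M] (m : Fin n → M) : Prop :=
  m ∈ Submodule.span A
    {v : Fin n → M | ∃ (a : Fin n → A) (x : M), AdmissibleVec c a ∧ v = fun i => a i • x}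

/-- `M` is vector-realisable if every admissible vector over `M` is realisable. -/
def VectorRealisable {n d : ℕ} (c : Fin n → Fin d → Fin d → A)
    (M : Type*) [AddCommGroup M] [Module A M] : Prop :=
  ∀ m : Fin n → M, AdmissibleVec c m → RealisableVec c m

/-- `(m_{st})` is an admissible matrix for the structure constants `c`:
`∑_t cᵗ_{is} m_{ut} = ∑_t cᵘ_{it} m_{ts}` for all `i, s, u`. -/
def AdmissibleMat {n d : ℕ} (c : Fin n → Fin d → Fin d → A)
    {M : Type*} [AddCommGroup M] [Module A M] (m : Fin d → Fin d → M) : Prop :=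
  ∀ (i : Fin n) (s u : Fin d), ∑ t, c i s t • m u t = ∑ t, c i t u • m t s

/-- The submodule of admissible matrices. -/
def admissibleMatSub {n d : ℕ} (c : Fin n → Fin d → Fin d → A)
    (M : Type*) [AddCommGroup M] [Module A M] : Submodule A (Fin d → Fin d → M) where
  carrier := {m | AdmissibleMat c m}
  add_mem' {x y} hx hy := fun i s u => by
    simp only [Pi.add_apply, smul_add, Finset.sum_add_distrib, hx i s u, hy i s u]
  zero_mem' := fun i s u => by simp
  smul_mem' a x hx := fun i s u => by
    simp only [Pi.smul_apply, smul_comm _ a, ← Finset.smul_sum, hx i s u]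

/-- A matrix is realisable if it lies in the image of the natural map
`Mat_d(A)_ad ⊗_A M → Mat_d(M)`, i.e. in the span of the matrices `(a_{st} • x)` with
`(a_{st})` an admissible matrix of scalars. -/
def RealisableMat {n d : ℕ} (c : Fin n → Fin d → Fin d → A)
    {M : Type*} [AddCommGroup M] [Module A M] (m : Fin d → Fin d → M) : Prop :=
  m ∈ Submodule.span A
    {v : Fin d → Fin d → M | ∃ (a : Fin d → Fin d → A) (x : M),
      AdmissibleMat c a ∧ v = fun s t => a s t • x}

/-- The submodule of realisable matrices. -/
def realisableMatSub {n d : ℕ} (c : Fin n → Fin d → Fin d → A)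
    (M : Type*) [AddCommGroup M] [Module A M] : Submodule A (Fin d → Fin d → M) :=
  Submodule.span A
    {v : Fin d → Fin d → M | ∃ (a : Fin d → Fin d → A) (x : M),
      AdmissibleMat c a ∧ v = fun s t => a s t • x}

/-- `M` is matrix-realisable if every admissible matrix over `M` is realisable. -/
def MatrixRealisable {n d : ℕ} (c : Fin n → Fin d → Fin d → A)
    (M : Type*) [AddCommGroup M] [Module A M] : Prop :=
  ∀ m : Fin d → Fin d → M, AdmissibleMat c m → RealisableMat c m

end Realisable

section Localisation

variable {A : Type*} [CommRing A] (S : Submonoid A)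
variable (M : Type*) [AddCommGroup M] [Module A M]

/-- The natural componentwise map `Mat_d(M) → Mat_d(S⁻¹M)`. -/
noncomputable def matMk {d : ℕ} :
    (Fin d → Fin d → M) →ₗ[A] (Fin d → Fin d → LocalizedModule S M) where
  toFun m := fun s t => LocalizedModule.mkLinearMap S M (m s t)
  map_add' x y := by funext s t; exact map_add _ _ _
  map_smul' a x := by funext s t; simp

variable {n d : ℕ} (c : Fin n → Fin d → Fin d → A)

lemma algebraMap_smul_mk (r : A) (x : M) :
    algebraMap A (Localization S) r • (LocalizedModule.mkLinearMap S M x)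
      = LocalizedModule.mkLinearMap S M (r • x) := by
  rw [algebraMap_smul, map_smul]

/-- The componentwise localisation map sends admissible matrices to admissible matrices. -/
lemma matMk_mem_admissible :
    ∀ m ∈ admissibleMatSub c M,
      matMk S M m ∈ (admissibleMatSub
        (fun i s t => algebraMap A (Localization S) (c i s t))
        (LocalizedModule S M)).restrictScalars A := by
  intro m hm i s u
  show ∑ t, algebraMap A (Localization S) (c i s t) • LocalizedModule.mkLinearMap S M (m u t)
      = ∑ t, algebraMap A (Localization S) (c i t u) • LocalizedModule.mkLinearMap S M (m t s)
  simp only [algebraMap_smul_mk, ← map_sum]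
  rw [hm i s u]

/-- Admissible scalar matrices localise to admissible scalar matrices. -/
lemma admissibleMat_algebraMap (a : Fin d → Fin d → A) (ha : AdmissibleMat c a) :
    AdmissibleMat (fun i s t => algebraMap A (Localization S) (c i s t))
      (fun s t => algebraMap A (Localization S) (a s t)) := by
  intro i s u
  simp only [smul_eq_mul, ← map_mul, ← map_sum]
  rw [show ∑ t, c i s t * a u t = ∑ t, c i t u * a t s by
    simpa only [smul_eq_mul] using ha i s u]

/-- The componentwise localisation map sends realisable matrices to realisable matrices. -/
lemma matMk_mem_realisable :
    ∀ m ∈ realisableMatSub c M,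
      matMk S M m ∈ (realisableMatSub
        (fun i s t => algebraMap A (Localization S) (c i s t))
        (LocalizedModule S M)).restrictScalars A := by
  intro m hm
  simp only [Submodule.restrictScalars_mem]
  induction hm using Submodule.span_induction with
  | mem v hv =>
    obtain ⟨a, x, ha, rfl⟩ := hv
    refine Submodule.subset_span ⟨fun s t => algebraMap A (Localization S) (a s t),
      LocalizedModule.mkLinearMap S M x, admissibleMat_algebraMap S c a ha, ?_⟩
    funext s t
    show LocalizedModule.mkLinearMap S M (a s t • x) = _
    rw [algebraMap_smul_mk]
  | zero => rw [map_zero]; exact Submodule.zero_mem _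
  | add x y _ _ hx hy => rw [map_add]; exact Submodule.add_mem _ hx hy
  | smul a x _ hx =>
    rw [map_smul, ← algebraMap_smul (Localization S) a (matMk S M x)]
    exact Submodule.smul_mem _ _ hx

end Localisation


section Proof

variable {A : Type*} [CommRing A] (S : Submonoid A)

lemma matMk_apply (M : Type*) [AddCommGroup M] [Module A M] {d : ℕ}
    (m : Fin d → Fin d → M) (s t : Fin d) :
    matMk S M m s t = LocalizedModule.mkLinearMap S M (m s t) := rfl

private lemma prod_smul_eq {ι : Type*} [Fintype ι] [DecidableEq ι] (τ : ι → S)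
    {N : Type*} [AddCommMonoid N] [Module A N] {x y : ι → N}
    (h : ∀ i, τ i • x i = τ i • y i) (i : ι) :
    (∏ j, τ j) • x i = (∏ j, τ j) • y i := by
  rw [← Finset.prod_erase_mul Finset.univ τ (Finset.mem_univ i), mul_smul, mul_smul, h i]

/-- If `σ • y` lies in a submodule over the localized ring, then so does `y`. -/
lemma mem_of_smul_mem {N : Type*} [AddCommGroup N] [Module A N]
    [Module (Localization S) N] [IsScalarTower A (Localization S) N]
    (q : Submodule (Localization S) N) (σ : S) {y : N} (h : σ • y ∈ q) : y ∈ q := by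
  rw [Submonoid.smul_def, ← algebraMap_smul (Localization S) (σ : A) y] at h
  have hu := IsLocalization.map_units (Localization S) σ
  have h2 := q.smul_mem (↑hu.unit⁻¹) h
  rwa [smul_smul, IsUnit.val_inv_mul, one_smul] at h2

/-- `IsLocalizedModule` for the componentwise localization map on matrices. -/
lemma isLocalizedModule_matMk (M : Type*) [AddCommGroup M] [Module A M] {d : ℕ} :
    IsLocalizedModule S (matMk S M (d := d)) := by
  classical
  refine ⟨fun σ => ?_, fun y => ?_, fun {x y} h => ?_⟩
  · rw [Module.End.isUnit_iff]
    have h1 := (Module.End.isUnit_iff _).mp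
      (IsLocalizedModule.map_units (LocalizedModule.mkLinearMap S M) σ)
    constructor
    · intro x y hxy
      funext u t
      apply h1.injective
      simpa only [Module.algebraMap_end_apply, Pi.smul_apply] using congrFun (congrFun hxy u) t
    · intro y
      choose g hg using h1.surjective
      refine ⟨fun u t => g (y u t), ?_⟩
      funext u t
      simpa only [Module.algebraMap_end_apply, Pi.smul_apply] using hg (y u t)
  · choose g hg using fun z : LocalizedModule S M =>
      IsLocalizedModule.surj S (LocalizedModule.mkLinearMap S M) z
    set τ : Fin d × Fin d → S := fun q => (g (y q.1 q.2)).2 with hτ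
    refine ⟨⟨fun u t =>
      ((∏ q ∈ Finset.univ.erase (u, t), τ q : S) : A) • (g (y u t)).1, ∏ q, τ q⟩, ?_⟩
    funext u t
    show (∏ q, τ q) • y u t = LocalizedModule.mkLinearMap S M _
    rw [← Finset.prod_erase_mul Finset.univ τ (Finset.mem_univ (u, t)), mul_smul,
      hg (y u t), map_smul]
    rfl
  · have key : ∀ q : Fin d × Fin d, ∃ τ : S, τ • x q.1 q.2 = τ • y q.1 q.2 := by
      intro q
      exact IsLocalizedModule.exists_of_eq (S := S) (f := LocalizedModule.mkLinearMap S M)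
        (congrFun (congrFun h q.1) q.2)
    choose τ hτ using key
    refine ⟨∏ q, τ q, ?_⟩
    funext u t
    show (∏ q, τ q) • x u t = (∏ q, τ q) • y u t
    exact prod_smul_eq S τ (x := fun q => x q.1 q.2) (y := fun q => y q.1 q.2) hτ (u, t)

variable {n d : ℕ}

/-- Surjectivity (up to denominators) onto the admissible matrices of the localized module. -/
lemma admissible_surj (c : Fin n → Fin d → Fin d → A)
    (M : Type*) [AddCommGroup M] [Module A M] :
    ∀ y ∈ (admissibleMatSub (fun i s t => algebraMap A (Localization S) (c i s t))
        (LocalizedModule S M)).restrictScalars A,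
      ∃ σ : S, ∃ x ∈ admissibleMatSub c M, σ • y = matMk S M x := by
  classical
  intro y hy
  haveI := isLocalizedModule_matMk S M (d := d)
  obtain ⟨⟨m₀, σ₀⟩, h₀⟩ := IsLocalizedModule.surj S (matMk S M) y
  have hadm : AdmissibleMat (fun i s t => algebraMap A (Localization S) (c i s t))
      (matMk S M m₀) := by
    rw [← h₀, Submonoid.smul_def]
    exact ((admissibleMatSub _ _).restrictScalars A).smul_mem _ hy
  have key : ∀ p : Fin n × Fin d × Fin d, ∃ τ : S,
      τ • (∑ t, c p.1 p.2.1 t • m₀ p.2.2 t) = τ • (∑ t, c p.1 t p.2.2 • m₀ t p.2.1) := by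
    rintro ⟨i, s, u⟩
    apply IsLocalizedModule.exists_of_eq (S := S) (f := LocalizedModule.mkLinearMap S M)
    have h2 := hadm i s u
    simpa only [matMk_apply, algebraMap_smul_mk, ← map_sum] using h2
  choose τ hτ using key
  set τ₀ : S := ∏ p, τ p with hτ₀
  have hx : (τ₀ : A) • m₀ ∈ admissibleMatSub c M := by
    intro i s u
    have h2 := prod_smul_eq S τ
      (x := fun p => ∑ t, c p.1 p.2.1 t • m₀ p.2.2 t)
      (y := fun p => ∑ t, c p.1 t p.2.2 • m₀ t p.2.1) hτ (i, s, u)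
    simp only [Submonoid.smul_def] at h2
    simp only [Pi.smul_apply, smul_comm _ ((τ₀ : A)), ← Finset.smul_sum]
    exact h2
  refine ⟨τ₀ * σ₀, (τ₀ : A) • m₀, hx, ?_⟩
  rw [mul_smul, h₀, Submonoid.smul_def, ← map_smul]

/-- Surjectivity (up to denominators) onto the realisable matrices of the localized module. -/
lemma realisable_surj (c : Fin n → Fin d → Fin d → A)
    (M : Type*) [AddCommGroup M] [Module A M] :
    ∀ y ∈ (realisableMatSub (fun i s t => algebraMap A (Localization S) (c i s t))
        (LocalizedModule S M)).restrictScalars A,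
      ∃ σ : S, ∃ x ∈ realisableMatSub c M, σ • y = matMk S M x := by
  classical
  intro y hy
  rw [Submodule.restrictScalars_mem] at hy
  induction hy using Submodule.span_induction with
  | mem v hv =>
    obtain ⟨a, x, ha, rfl⟩ := hv
    choose g hg using fun p : Fin d × Fin d => IsLocalization.surj S (a p.1 p.2)
    set σa : S := ∏ p, (g p).2 with hσa
    set a₀ : Fin d → Fin d → A := fun s t =>
      ((∏ p ∈ Finset.univ.erase (s, t), (g p).2 : S) : A) * (g (s, t)).1 with ha₀
    have key : ∀ s t, algebraMap A (Localization S) (a₀ s t)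
        = algebraMap A (Localization S) ((σa : S) : A) * a s t := by
      intro s t
      have h1 := hg (s, t)
      have h2 : ((∏ p ∈ Finset.univ.erase (s, t), (g p).2) * (g (s, t)).2 : S) = σa :=
        Finset.prod_erase_mul _ _ (Finset.mem_univ _)
      rw [ha₀]
      simp only [map_mul]
      rw [← h1, ← h2, Submonoid.coe_mul, map_mul]
      ring
    have key2 : ∀ p : Fin n × Fin d × Fin d, ∃ τ : S,
        (τ : A) * (∑ t, c p.1 p.2.1 t * a₀ p.2.2 t)
          = (τ : A) * (∑ t, c p.1 t p.2.2 * a₀ t p.2.1) := by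
      rintro ⟨i, s, u⟩
      apply IsLocalization.exists_of_eq (M := S) (S := Localization S)
      have h3 := ha i s u
      simp only [smul_eq_mul] at h3
      calc algebraMap A (Localization S) (∑ t, c i s t * a₀ u t)
          = algebraMap A (Localization S) ((σa : S) : A)
              * ∑ t, algebraMap A (Localization S) (c i s t) * a u t := by
            rw [map_sum, Finset.mul_sum]
            exact Finset.sum_congr rfl fun t _ => by rw [map_mul, key]; ring
        _ = algebraMap A (Localization S) ((σa : S) : A)
              * ∑ t, algebraMap A (Localization S) (c i t u) * a t s := by rw [h3]
        _ = algebraMap A (Localization S) (∑ t, c i t u * a₀ t s) := by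
            rw [map_sum, Finset.mul_sum]
            exact (Finset.sum_congr rfl fun t _ => by rw [map_mul, key]; ring).symm
    choose τ hτ using key2
    set τ₀ : S := ∏ p, τ p with hτ₀
    set a₁ : Fin d → Fin d → A := fun s t => (τ₀ : A) * a₀ s t with ha₁
    have ha₁adm : AdmissibleMat c a₁ := by
      intro i s u
      have h2 := prod_smul_eq S τ
        (x := fun p => ∑ t, c p.1 p.2.1 t * a₀ p.2.2 t)
        (y := fun p => ∑ t, c p.1 t p.2.2 * a₀ t p.2.1)
        (fun p => by simpa only [Submonoid.smul_def, smul_eq_mul] using hτ p) (i, s, u)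
      simp only [Submonoid.smul_def, smul_eq_mul] at h2
      simp only [ha₁, smul_eq_mul]
      calc ∑ t, c i s t * ((τ₀ : A) * a₀ u t)
          = (τ₀ : A) * ∑ t, c i s t * a₀ u t := by
            rw [Finset.mul_sum]; exact Finset.sum_congr rfl fun t _ => by ring
        _ = (τ₀ : A) * ∑ t, c i t u * a₀ t s := h2
        _ = ∑ t, c i t u * ((τ₀ : A) * a₀ t s) := by
            rw [Finset.mul_sum]; exact Finset.sum_congr rfl fun t _ => by ring
    obtain ⟨⟨x₀, μ⟩, hx₀⟩ := IsLocalizedModule.surj S (LocalizedModule.mkLinearMap S M) x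
    refine ⟨σa * τ₀ * μ, fun s t => a₁ s t • x₀,
      Submodule.subset_span ⟨a₁, x₀, ha₁adm, rfl⟩, ?_⟩
    funext s t
    show ((σa * τ₀ * μ : S) : A) • (a s t • x) = LocalizedModule.mkLinearMap S M (a₁ s t • x₀)
    rw [← algebraMap_smul_mk S M, ← algebraMap_smul (Localization S) ((σa * τ₀ * μ : S) : A),
      smul_smul]
    rw [Submonoid.smul_def] at hx₀
    rw [← hx₀, ← algebraMap_smul (Localization S) ((μ : S) : A) x, smul_smul]
    congr 1
    simp only [Submonoid.coe_mul, map_mul, ha₁]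
    rw [key s t]
    ring
  | zero => exact ⟨1, 0, Submodule.zero_mem _, by simp⟩
  | add x y _ _ hx hy =>
    obtain ⟨σ₁, m₁, h₁, e₁⟩ := hx
    obtain ⟨σ₂, m₂, h₂, e₂⟩ := hy
    refine ⟨σ₁ * σ₂, (σ₂ : A) • m₁ + (σ₁ : A) • m₂,
      add_mem (Submodule.smul_mem _ _ h₁) (Submodule.smul_mem _ _ h₂), ?_⟩
    simp only [Submonoid.smul_def] at e₁ e₂ ⊢
    rw [map_add, map_smul, map_smul, ← e₁, ← e₂, Submonoid.coe_mul, smul_add, smul_smul,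
      smul_smul, mul_comm ((σ₂ : A)) ((σ₁ : A))]
  | smul r x _ hx =>
    obtain ⟨σ, m, hm, e⟩ := hx
    obtain ⟨⟨r₀, μ⟩, hr⟩ := IsLocalization.surj S r
    refine ⟨μ * σ, r₀ • m, Submodule.smul_mem _ _ hm, ?_⟩
    simp only [Submonoid.smul_def] at e ⊢
    rw [map_smul, ← e]
    rw [← algebraMap_smul (Localization S) ((μ * σ : S) : A) (r • x), smul_smul,
      ← algebraMap_smul (Localization S) (r₀ : A) (((σ : S) : A) • x),
      ← algebraMap_smul (Localization S) ((σ : S) : A) x, smul_smul]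
    congr 1
    rw [Submonoid.coe_mul, map_mul, ← hr]
    ring

/-- `IsLocalizedModule` transfers to restrictions of a localization map. -/
lemma isLocalizedModule_restrict {M N : Type*} [AddCommGroup M] [Module A M]
    [AddCommGroup N] [Module A N]
    (f : M →ₗ[A] N) [IsLocalizedModule S f]
    {p : Submodule A M} {q : Submodule A N} (hf : ∀ x ∈ p, f x ∈ q)
    (hsurj : ∀ y ∈ q, ∃ σ : S, ∃ x ∈ p, σ • y = f x)
    (hmem : ∀ (σ : S) (y : N), σ • y ∈ q → y ∈ q) :
    IsLocalizedModule S (f.restrict hf) := by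
  refine ⟨fun σ => ?_, fun y => ?_, fun {x y} h => ?_⟩
  · rw [Module.End.isUnit_iff]
    have h1 := (Module.End.isUnit_iff _).mp (IsLocalizedModule.map_units f σ)
    constructor
    · intro x y hxy
      have h2 := congrArg Subtype.val hxy
      simp only [Module.algebraMap_end_apply, SetLike.val_smul] at h2
      exact Subtype.ext (h1.injective (by
        simpa only [Module.algebraMap_end_apply] using h2))
    · intro y
      obtain ⟨z, hz⟩ := h1.surjective (y : N)
      simp only [Module.algebraMap_end_apply] at hz
      have hzq : z ∈ q := hmem σ z (by rw [Submonoid.smul_def, hz]; exact y.2)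
      refine ⟨⟨z, hzq⟩, Subtype.ext ?_⟩
      simpa only [Module.algebraMap_end_apply, SetLike.val_smul] using hz
  · obtain ⟨σ, x, hx, hσ⟩ := hsurj y y.2
    refine ⟨⟨⟨x, hx⟩, σ⟩, Subtype.ext ?_⟩
    simpa only [Submonoid.smul_def, SetLike.val_smul, LinearMap.restrict_apply] using hσ
  · have h2 : f x = f y := by
      have := congrArg Subtype.val h
      simpa only [LinearMap.restrict_apply] using this
    obtain ⟨c, hc⟩ := IsLocalizedModule.exists_of_eq (S := S) (f := f) h2
    exact ⟨c, Subtype.ext (by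
      simpa only [Submonoid.smul_def, SetLike.val_smul] using hc)⟩

end Proof

/-- **Lemma 2.7 (matrix version).** Let `A` be a Dedekind domain or a field, with structure
constants `c` coming from a basis of an `A`-algebra `Λ` and a basis of a `Λ`-module `P`, and
let `S` be a multiplicatively closed subset of `A`.  For an `A`-module `M`, the inclusions of
`Mat_d(M)_ad` and `Mat_d(M)_real` into `Mat_d(M)` induce isomorphisms
`S⁻¹(Mat_d(M)_ad) ≅ Mat_d(S⁻¹M)_ad` and `S⁻¹(Mat_d(M)_real) ≅ Mat_d(S⁻¹M)_real`
(formalised: the restrictions of the natural map `Mat_d(M) → Mat_d(S⁻¹M)` to these submodules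
are localisation maps); in particular, if `M` is a matrix-realisable `A`-module, then `S⁻¹M`
is a matrix-realisable `S⁻¹A`-module. -/
theorem localization_matrixRealisable
    {A : Type*} [CommRing A] [IsDomain A]
    (hA : IsDedekindDomain A ∨ IsField A)
    {n d : ℕ}
    (Λ : Type*) [Ring Λ] [Algebra A Λ]
    (P : Type*) [AddCommGroup P] [Module A P] [Module Λ P] [IsScalarTower A Λ P]
    (bΛ : Module.Basis (Fin n) A Λ) (bP : Module.Basis (Fin d) A P)
    (c : Fin n → Fin d → Fin d → A)
    (hc : ∀ (i : Fin n) (s : Fin d), bΛ i • bP s = ∑ t, c i s t • bP t)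
    (S : Submonoid A)
    (M : Type*) [AddCommGroup M] [Module A M] :
    IsLocalizedModule S
        ((matMk S M (d := d)).restrict (fun x hx => matMk_mem_admissible S M c x hx)) ∧
    IsLocalizedModule S
        ((matMk S M (d := d)).restrict (fun x hx => matMk_mem_realisable S M c x hx)) ∧
    (MatrixRealisable c M →
      MatrixRealisable (fun i s t => algebraMap A (Localization S) (c i s t))
        (LocalizedModule S M)) := by
  classical
  haveI := isLocalizedModule_matMk S M (d := d)
  have hmemA : ∀ (σ : S) (y : Fin d → Fin d → LocalizedModule S M),
      σ • y ∈ (admissibleMatSub (fun i s t => algebraMap A (Localization S) (c i s t))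
        (LocalizedModule S M)).restrictScalars A →
      y ∈ (admissibleMatSub (fun i s t => algebraMap A (Localization S) (c i s t))
        (LocalizedModule S M)).restrictScalars A :=
    fun σ y h => mem_of_smul_mem S _ σ h
  have hmemR : ∀ (σ : S) (y : Fin d → Fin d → LocalizedModule S M),
      σ • y ∈ (realisableMatSub (fun i s t => algebraMap A (Localization S) (c i s t))
        (LocalizedModule S M)).restrictScalars A →
      y ∈ (realisableMatSub (fun i s t => algebraMap A (Localization S) (c i s t))
        (LocalizedModule S M)).restrictScalars A :=
    fun σ y h => mem_of_smul_mem S _ σ h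
  refine ⟨isLocalizedModule_restrict S (matMk S M) _ (admissible_surj S c M) hmemA,
    isLocalizedModule_restrict S (matMk S M) _ (realisable_surj S c M) hmemR, ?_⟩
  intro hM m hm
  obtain ⟨σ, m₀, hm₀, h⟩ := admissible_surj S c M m hm
  have hreal : matMk S M m₀ ∈ (realisableMatSub
      (fun i s t => algebraMap A (Localization S) (c i s t))
      (LocalizedModule S M)).restrictScalars A :=
    matMk_mem_realisable S M c m₀ (hM m₀ hm₀)
  rw [← h] at hreal
  exact mem_of_smul_mem S _ σ hreal
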